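/- For all integers h ≥ 1 and 0 ≤ n ≤ h-1, and any rational x: (-1)^n · C(x+n-h, n) · C(h-1, n) / C(2h-1, n) = Σ_{i=0}^{n} (-1)^{n-i} · C(x+n-i, n-i) · C(x+h, i) · (h! / (h-i)!) · ((2h-1-i)! / (2h-1)!). -/

import Mathlib

/-- Generalized binomial coefficient `C(x, k) = x(x-1)⋯(x-k+1)/k!` for rational `x`. -/
noncomputable def gchoose (x : ℚ) (k : ℕ) : ℚ :=
  (∏ i ∈ Finset.range k, (x - i)) / (Nat.factorial k)

lemma gchoose_zero (x : ℚ) : gchoose x 0 = 1 := by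
  simp [gchoose]

lemma fact_cast_ne (k : ℕ) : ((Nat.factorial k : ℚ)) ≠ 0 :=
  Nat.cast_ne_zero.mpr (Nat.factorial_ne_zero k)

lemma gchoose_succ (x : ℚ) (k : ℕ) :
    gchoose x (k + 1) = gchoose x k * (x - k) / (k + 1) := by
  have hk : ((Nat.factorial k : ℚ)) ≠ 0 := fact_cast_ne k
  have hk1 : ((k : ℚ) + 1) ≠ 0 := by positivity
  unfold gchoose
  rw [Finset.prod_range_succ, Nat.factorial_succ]
  push_cast
  field_simp

lemma gchoose_succ_top (y : ℚ) (k : ℕ) :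
    gchoose (y + 1) (k + 1) = gchoose y k * (y + 1) / (k + 1) := by
  have hk : ((Nat.factorial k : ℚ)) ≠ 0 := fact_cast_ne k
  have hk1 : ((k : ℚ) + 1) ≠ 0 := by positivity
  unfold gchoose
  rw [Finset.prod_range_succ']
  have : (∏ j ∈ Finset.range k, (y + 1 - (↑(j + 1) : ℚ))) =
      ∏ j ∈ Finset.range k, (y - j) := by
    refine Finset.prod_congr rfl fun j _ => by push_cast; ring
  rw [this, Nat.factorial_succ]
  push_cast
  field_simp
  ring

/-- `C(2h-1, k) ≠ 0` for `k ≤ 2h-1`. -/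
lemma gchoose_top_ne (h k : ℕ) (hk : k ≤ 2 * h - 1) :
    gchoose (2 * (h : ℚ) - 1) k ≠ 0 := by
  unfold gchoose
  apply div_ne_zero _ (fact_cast_ne k)
  apply Finset.prod_ne_zero_iff.mpr
  intro j hj
  have hj' : j < k := Finset.mem_range.mp hj
  have h1 : j + 2 ≤ 2 * h := by omega
  have : (j : ℚ) + 2 ≤ 2 * (h : ℚ) := by exact_mod_cast h1
  intro hc
  have : (2 : ℚ) * h - 1 = j := by linarith [sub_eq_zero.mp hc]
  linarith

/-- The summand. -/
noncomputable def T (h : ℕ) (x : ℚ) (n i : ℕ) : ℚ :=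
  (-1 : ℚ) ^ (n - i) * gchoose (x + n - i) (n - i) *
    gchoose (x + h) i * ((Nat.factorial h : ℚ) / (Nat.factorial (h - i) : ℚ)) *
    ((Nat.factorial (2 * h - 1 - i) : ℚ) / (Nat.factorial (2 * h - 1) : ℚ))

set_option maxHeartbeats 2000000 in
/-- WZ-style telescoping step. -/
lemma step (h n i : ℕ) (x : ℚ) (hi : i ≤ n) (hnh : n + 2 ≤ h) :
    ((n : ℚ) + 1) * (2 * (h : ℚ) - 1 - n) * T h x (n + 1) i
      + (x + n + 1 - h) * ((h : ℚ) - 1 - n) * T h x n i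
    = (-(((i + 1 : ℕ)) : ℚ) * (2 * (h : ℚ) - ((i + 1 : ℕ) : ℚ)) * T h x (n + 1) (i + 1))
      - (-(i : ℚ) * (2 * (h : ℚ) - (i : ℚ)) * T h x (n + 1) i) := by
  unfold T
  -- natural number subtraction rewrites
  rw [show n + 1 - i = (n - i) + 1 from by omega,
      show n + 1 - (i + 1) = n - i from by omega,
      show h - i = (h - (i + 1)) + 1 from by omega,
      show 2 * h - 1 - i = (2 * h - 1 - (i + 1)) + 1 from by omega]
  rw [show (x + (((n + 1 : ℕ)) : ℚ) - i) = (x + (n : ℚ) - i) + 1 from by push_cast; ring,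
      show (x + (((n + 1 : ℕ)) : ℚ) - ((i + 1 : ℕ) : ℚ)) = (x + (n : ℚ) - i) from by
        push_cast; ring]
  rw [gchoose_succ_top (x + (n : ℚ) - i) (n - i), gchoose_succ (x + h) i]
  rw [Nat.factorial_succ (h - (i + 1)), Nat.factorial_succ (2 * h - 1 - (i + 1))]
  rw [pow_succ]
  have c1 : ((n - i : ℕ) : ℚ) = (n : ℚ) - i := by
    rw [Nat.cast_sub hi]
  have c2 : ((h - (i + 1) : ℕ) : ℚ) = (h : ℚ) - i - 1 := by
    rw [Nat.cast_sub (by omega)]; push_cast; ring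
  have c3 : ((2 * h - 1 - (i + 1) : ℕ) : ℚ) = 2 * (h : ℚ) - i - 2 := by
    rw [Nat.cast_sub (by omega), Nat.cast_sub (by omega)]; push_cast; ring
  push_cast [c1, c2, c3]
  have hne1 : ((n : ℚ) - i + 1) ≠ 0 := by
    have : (i : ℚ) ≤ n := by exact_mod_cast hi
    linarith
  have hne2 : ((i : ℚ) + 1) ≠ 0 := by positivity
  have hne3 : ((h : ℚ) - i - 1 + 1) ≠ 0 := by
    have : (i : ℚ) + 2 ≤ h := by exact_mod_cast (by omega : i + 2 ≤ h)
    intro hc; linarith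
  have hne4 : (2 * (h : ℚ) - i - 2 + 1) ≠ 0 := by
    have : (i : ℚ) + 2 ≤ h := by exact_mod_cast (by omega : i + 2 ≤ h)
    intro hc; linarith
  have hne5 : ((Nat.factorial (h - (i + 1)) : ℚ)) ≠ 0 := fact_cast_ne _
  have hne6 : ((Nat.factorial (2 * h - 1 - (i + 1)) : ℚ)) ≠ 0 := fact_cast_ne _
  have hne7 : ((Nat.factorial (2 * h - 1) : ℚ)) ≠ 0 := fact_cast_ne _
  set P := gchoose (x + (n : ℚ) - i) (n - i) with hP
  set Q := gchoose (x + (h : ℚ)) i with hQ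
  set s := ((-1 : ℚ)) ^ (n - i) with hs
  set F1 := ((Nat.factorial (h - (i + 1)) : ℚ)) with hF1
  set F2 := ((Nat.factorial (2 * h - 1 - (i + 1)) : ℚ)) with hF2
  set F3 := ((Nat.factorial (2 * h - 1) : ℚ)) with hF3
  set FH := ((Nat.factorial h : ℚ)) with hFH
  rw [show ((h : ℚ) - i - 1 + 1) = (h : ℚ) - i from by ring,
      show (2 * (h : ℚ) - i - 2 + 1) = 2 * (h : ℚ) - i - 1 from by ring]
  have hne3' : ((h : ℚ) - i) ≠ 0 := by intro hc; exact hne3 (by linarith)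
  have hne4' : (2 * (h : ℚ) - i - 1) ≠ 0 := by intro hc; exact hne4 (by linarith)
  field_simp
  ring

/-- the closed-form side satisfies the same first-order recurrence. -/
lemma closed_rec (h n : ℕ) (x : ℚ) (hnh : n + 2 ≤ h) :
    ((n : ℚ) + 1) * (2 * (h : ℚ) - 1 - n) *
      ((-1 : ℚ) ^ (n + 1) * gchoose (x + ((n + 1 : ℕ) : ℚ) - h) (n + 1) *
        gchoose ((h : ℚ) - 1) (n + 1) / gchoose (2 * (h : ℚ) - 1) (n + 1))
    = -((x + n + 1 - h) * ((h : ℚ) - 1 - n)) *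
      ((-1 : ℚ) ^ n * gchoose (x + n - h) n * gchoose ((h : ℚ) - 1) n /
        gchoose (2 * (h : ℚ) - 1) n) := by
  rw [show (x + ((n + 1 : ℕ) : ℚ) - h) = (x + (n : ℚ) - h) + 1 from by push_cast; ring]
  rw [gchoose_succ_top (x + (n : ℚ) - h) n, gchoose_succ ((h : ℚ) - 1) n,
      gchoose_succ (2 * (h : ℚ) - 1) n, pow_succ]
  have hne1 : gchoose (2 * (h : ℚ) - 1) n ≠ 0 := gchoose_top_ne h n (by omega)
  have hne2 : (2 * (h : ℚ) - 1 - n) ≠ 0 := by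
    have : (n : ℚ) + 2 ≤ h := by exact_mod_cast hnh
    intro hc; linarith
  have hne3 : ((n : ℚ) + 1) ≠ 0 := by positivity
  field_simp
  ring

theorem stmt3 (h n : ℕ) (hh : 1 ≤ h) (hn : n ≤ h - 1) (x : ℚ) :
    (-1 : ℚ) ^ n * gchoose (x + n - h) n * gchoose ((h : ℚ) - 1) n / gchoose (2 * (h : ℚ) - 1) n =
      ∑ i ∈ Finset.range (n + 1), (-1 : ℚ) ^ (n - i) * gchoose (x + n - i) (n - i) *
        gchoose (x + h) i * ((Nat.factorial h : ℚ) / (Nat.factorial (h - i) : ℚ)) *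
        ((Nat.factorial (2 * h - 1 - i) : ℚ) / (Nat.factorial (2 * h - 1) : ℚ)) := by
  have key : ∀ m : ℕ, m ≤ h - 1 →
      (-1 : ℚ) ^ m * gchoose (x + m - h) m * gchoose ((h : ℚ) - 1) m /
          gchoose (2 * (h : ℚ) - 1) m
        = ∑ i ∈ Finset.range (m + 1), T h x m i := by
    intro m
    induction m with
    | zero =>
      intro _
      rw [Finset.sum_range_one]
      unfold T
      simp [gchoose_zero, div_self (fact_cast_ne h), div_self (fact_cast_ne (2 * h - 1))]
    | succ n ih =>
      intro hm
      have hnh : n + 2 ≤ h := by omega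
      have ihe := ih (by omega)
      set A : ℚ := ((n : ℚ) + 1) * (2 * (h : ℚ) - 1 - n) with hA
      set B : ℚ := (x + n + 1 - h) * ((h : ℚ) - 1 - n) with hB
      have hAne : A ≠ 0 := by
        have h1 : ((n : ℚ) + 1) ≠ 0 := by positivity
        have h2 : (2 * (h : ℚ) - 1 - n) ≠ 0 := by
          have : (n : ℚ) + 2 ≤ h := by exact_mod_cast hnh
          intro hc; linarith
        exact mul_ne_zero h1 h2
      -- telescoping
      have tel : ∑ i ∈ Finset.range (n + 1), (A * T h x (n + 1) i + B * T h x n i)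
          = ∑ i ∈ Finset.range (n + 1),
              ((fun j : ℕ => -(j : ℚ) * (2 * (h : ℚ) - (j : ℚ)) * T h x (n + 1) j) (i + 1)
                - (fun j : ℕ => -(j : ℚ) * (2 * (h : ℚ) - (j : ℚ)) * T h x (n + 1) j) i) := by
        refine Finset.sum_congr rfl fun i hi => ?_
        have hi' : i ≤ n := by
          have := Finset.mem_range.mp hi; omega
        simpa using step h n i x hi' hnh
      rw [Finset.sum_range_sub (fun j : ℕ => -(j : ℚ) * (2 * (h : ℚ) - (j : ℚ)) * T h x (n + 1) j)]
        at tel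
      have sum_split : ∑ i ∈ Finset.range (n + 1), (A * T h x (n + 1) i + B * T h x n i)
          = A * ∑ i ∈ Finset.range (n + 1), T h x (n + 1) i
            + B * ∑ i ∈ Finset.range (n + 1), T h x n i := by
        rw [Finset.sum_add_distrib, Finset.mul_sum, Finset.mul_sum]
      have main : A * ∑ i ∈ Finset.range (n + 2), T h x (n + 1) i
          = -B * ∑ i ∈ Finset.range (n + 1), T h x n i := by
        rw [Finset.sum_range_succ, mul_add]
        have ends : A * T h x (n + 1) (n + 1)
            + (-(((n + 1 : ℕ)) : ℚ) * (2 * (h : ℚ) - ((n + 1 : ℕ) : ℚ)) * T h x (n + 1) (n + 1)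
              - -((0 : ℕ) : ℚ) * (2 * (h : ℚ) - ((0 : ℕ) : ℚ)) * T h x (n + 1) 0) = 0 := by
          push_cast
          rw [hA]; ring
        have := sum_split.symm.trans tel
        linarith [this, ends]
      -- closed form recurrence
      have crec := closed_rec h n x hnh
      rw [← hA] at crec
      apply mul_left_cancel₀ hAne
      rw [main, ← ihe]
      rw [crec, hB]
  have := key n hn
  rw [this]
  simp only [T]
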